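/- Let Δ = (w₁, …, wₙ) be an arbitrary vector of real weights and, for x ∈ ℝⁿ and y ∈ ℝ, define the OWA penalty P(x, y) = Σ_{i=1}^{n} wᵢ · Sᵢ((x₁ − y)², …, (xₙ − y)²), where Sᵢ(r) denotes the i-th smallest component of the vector r. Then for every a ∈ ℝ and every x ∈ ℝⁿ, a real number μ minimizes y ↦ P(x, y) if and only if μ + a minimizes y ↦ P(x + a·𝟙, y); hence the associated OWA regression operator (the infimum of the minimizers) is shift-invariant for any choice of the weight vector Δ. -/

import Mathlib

/-- The OWA penalty: `P(x, y) = Σᵢ wᵢ · Sᵢ((x₁ − y)², …, (xₙ − y)²)`, where `Sᵢ(r)` is the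
`i`-th smallest component of `r` (here realised via the sorting permutation `Tuple.sort`). -/
noncomputable def owaPenalty (n : ℕ) (w : Fin n → ℝ) (x : Fin n → ℝ) (y : ℝ) : ℝ :=
  ∑ i : Fin n,
    w i * ((fun j => (x j - y) ^ 2) ∘ Tuple.sort (fun j => (x j - y) ^ 2)) i

lemma owaPenalty_shift (n : ℕ) (w : Fin n → ℝ) (x : Fin n → ℝ) (a z : ℝ) :
    owaPenalty n w (fun i => x i + a) z = owaPenalty n w x (z - a) := by
  have hf : (fun j => (x j + a - z) ^ 2) = fun j => (x j - (z - a)) ^ 2 := by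
    funext j; ring
  simp only [owaPenalty, hf]

/-- For any weight vector `Δ = (w₁, …, wₙ)`, a value `μ` minimizes the OWA
penalty `y ↦ P(x, y)` iff `μ + a` minimizes `y ↦ P(x + a·𝟙, y)`; hence the associated OWA
regression operator (the infimum of the minimizers) is shift-invariant. -/
theorem owa_regression_shift_invariant (n : ℕ) (w : Fin n → ℝ) :
    (∀ (x : Fin n → ℝ) (a μ : ℝ),
      (∀ y, owaPenalty n w x μ ≤ owaPenalty n w x y) ↔
        (∀ y, owaPenalty n w (fun i => x i + a) (μ + a) ≤
          owaPenalty n w (fun i => x i + a) y)) ∧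
    (∀ (x : Fin n → ℝ) (a : ℝ),
      {μ : ℝ | ∀ y, owaPenalty n w x μ ≤ owaPenalty n w x y}.Nonempty →
      BddBelow {μ : ℝ | ∀ y, owaPenalty n w x μ ≤ owaPenalty n w x y} →
      sInf {μ : ℝ | ∀ y, owaPenalty n w (fun i => x i + a) μ ≤
          owaPenalty n w (fun i => x i + a) y} =
        sInf {μ : ℝ | ∀ y, owaPenalty n w x μ ≤ owaPenalty n w x y} + a) := by
  have key : ∀ (x : Fin n → ℝ) (a μ : ℝ),
      (∀ y, owaPenalty n w x μ ≤ owaPenalty n w x y) ↔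
        (∀ y, owaPenalty n w (fun i => x i + a) (μ + a) ≤
          owaPenalty n w (fun i => x i + a) y) := by
    intro x a μ
    constructor
    · intro h y
      rw [owaPenalty_shift, owaPenalty_shift, add_sub_cancel_right]
      exact h (y - a)
    · intro h y
      have := h (y + a)
      rw [owaPenalty_shift, owaPenalty_shift, add_sub_cancel_right,
        add_sub_cancel_right] at this
      exact this
  refine ⟨key, ?_⟩
  intro x a hne hbdd
  have hset : {μ : ℝ | ∀ y, owaPenalty n w (fun i => x i + a) μ ≤
      owaPenalty n w (fun i => x i + a) y} =
      (fun μ => μ + a) '' {μ : ℝ | ∀ y, owaPenalty n w x μ ≤ owaPenalty n w x y} := by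
    ext μ
    simp only [Set.mem_setOf_eq, Set.mem_image]
    constructor
    · intro h
      refine ⟨μ - a, ?_, by ring⟩
      rw [key (x := x) (a := a) (μ := μ - a)]
      simpa using h
    · rintro ⟨ν, hν, rfl⟩
      exact (key x a ν).mp hν
  rw [hset]
  have hglb := isGLB_csInf hne hbdd
  have h2 : IsGLB ((fun μ => μ + a) ''
      {μ : ℝ | ∀ y, owaPenalty n w x μ ≤ owaPenalty n w x y})
      (sInf {μ : ℝ | ∀ y, owaPenalty n w x μ ≤ owaPenalty n w x y} + a) := by
    constructor
    · rintro _ ⟨ν, hν, rfl⟩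
      exact add_le_add_left (hglb.1 hν) a
    · intro b hb
      have : b - a ∈ lowerBounds {μ : ℝ | ∀ y, owaPenalty n w x μ ≤ owaPenalty n w x y} := by
        intro ν hν
        have := hb ⟨ν, hν, rfl⟩
        simp only at this
        linarith
      have := hglb.2 this
      linarith
  exact h2.csInf_eq (hne.image _)
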